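/- Expected smoothness bound for τ-partition independent sampling (Lemma 1(ii)): assume each f_i is convex and L_i-smooth and each partition average f_{C_j} is L_{C_j}-smooth. Then for all x, y ∈ ℝ^d, Σ_{j=1}^K q_{C_j} Σ_{S⊆C_j} (Π_{i∈S} p_i)(Π_{i∈C_j∖S} (1−p_i)) · ‖(1/n) Σ_{i∈S} (1/(q_{C_j} p_i))(∇f_i(x) − ∇f_i(y))‖² ≤ 2𝓛·(f(x) − f(y) − ⟨∇f(y), x−y⟩), where 𝓛 = (1/n) · max_j [ n_{C_j} L_{C_j}/q_{C_j} + max_{i∈C_j} L_i(1−p_i)/(q_{C_j} p_i) ]. -/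

import Mathlib

open Finset RealInnerProductSpace

section Helpers

variable {ι : Type*} [DecidableEq ι] {E : Type*} [NormedAddCommGroup E] [InnerProductSpace ℝ E]

lemma convexOn_finset_sum (t : Finset ι) {f : ι → E → ℝ}
    (h : ∀ i ∈ t, ConvexOn ℝ Set.univ (f i)) :
    ConvexOn ℝ Set.univ (fun u => ∑ i ∈ t, f i u) := by
  induction t using Finset.induction_on with
  | empty => simpa using convexOn_const (0:ℝ) convex_univ
  | insert a s ha ih =>
    simp only [Finset.sum_insert ha]
    exact (h a (Finset.mem_insert_self a s)).add (ih fun i hi => h i (Finset.mem_insert_of_mem hi))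

end Helpers


variable {ι : Type*} [DecidableEq ι] {E : Type*} [NormedAddCommGroup E] [InnerProductSpace ℝ E]

lemma wsum_one (C : Finset ι) (p : ι → ℝ) :
    ∑ S ∈ C.powerset, (∏ i ∈ S, p i) * ∏ i ∈ C \ S, (1 - p i) = 1 := by
  have h := Finset.prod_add p (fun i => 1 - p i) C
  simp only [add_sub_cancel, Finset.prod_const_one] at h
  exact h.symm

lemma insert_sdiff_insert'' {a : ι} {s S : Finset ι} (ha : a ∉ s) (hS : S ⊆ s) :
    insert a s \ insert a S = s \ S := by
  ext b
  simp only [Finset.mem_sdiff, Finset.mem_insert, not_or]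
  constructor
  · rintro ⟨hb | hb, hba, hbS⟩
    · exact absurd hb hba
    · exact ⟨hb, hbS⟩
  · rintro ⟨hb, hbS⟩
    exact ⟨Or.inr hb, fun h => ha (h ▸ hb), hbS⟩

lemma wmean (C : Finset ι) (p : ι → ℝ) (v : ι → E) :
    ∑ S ∈ C.powerset, ((∏ i ∈ S, p i) * ∏ i ∈ C \ S, (1 - p i)) • (∑ i ∈ S, v i)
      = ∑ i ∈ C, p i • v i := by
  induction C using Finset.induction_on with
  | empty => simp
  | insert a s ha ih =>
    rw [Finset.sum_powerset_insert ha, Finset.sum_insert ha]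
    have key : ∀ S ∈ s.powerset,
        ((∏ i ∈ insert a S, p i) * ∏ i ∈ insert a s \ insert a S, (1 - p i)) •
            (∑ i ∈ insert a S, v i)
          = (p a) • (((∏ i ∈ S, p i) * ∏ i ∈ s \ S, (1 - p i)) • (v a + ∑ i ∈ S, v i)) := by
      intro S hS
      rw [Finset.mem_powerset] at hS
      have haS : a ∉ S := fun h => ha (hS h)
      rw [Finset.prod_insert haS, insert_sdiff_insert'' ha hS, Finset.sum_insert haS,
        mul_assoc, mul_smul]
    have key2 : ∀ S ∈ s.powerset,
        ((∏ i ∈ S, p i) * ∏ i ∈ insert a s \ S, (1 - p i)) • (∑ i ∈ S, v i)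
          = (1 - p a) • (((∏ i ∈ S, p i) * ∏ i ∈ s \ S, (1 - p i)) • (∑ i ∈ S, v i)) := by
      intro S hS
      rw [Finset.mem_powerset] at hS
      have h2 : insert a s \ S = insert a (s \ S) := by
        rw [Finset.insert_sdiff_of_notMem _ (fun h => ha (hS h))]
      rw [h2, Finset.prod_insert (fun h => ha (Finset.mem_sdiff.1 h).1), smul_smul]
      congr 1
      ring
    rw [Finset.sum_congr rfl key, Finset.sum_congr rfl key2, ← Finset.smul_sum, ← Finset.smul_sum,
      ih]
    have h3 : ∑ S ∈ s.powerset,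
        ((∏ i ∈ S, p i) * ∏ i ∈ s \ S, (1 - p i)) • (v a + ∑ i ∈ S, v i)
        = v a + ∑ i ∈ s, p i • v i := by
      simp only [smul_add, Finset.sum_add_distrib, ih, ← Finset.sum_smul, wsum_one, one_smul]
    rw [h3]
    module

lemma wsq (C : Finset ι) (p : ι → ℝ) (v : ι → E) :
    ∑ S ∈ C.powerset, ((∏ i ∈ S, p i) * ∏ i ∈ C \ S, (1 - p i)) * ‖∑ i ∈ S, v i‖ ^ 2
      = ‖∑ i ∈ C, p i • v i‖ ^ 2 + ∑ i ∈ C, (p i * (1 - p i)) * ‖v i‖ ^ 2 := by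
  induction C using Finset.induction_on with
  | empty => simp
  | insert a s ha ih =>
    rw [Finset.sum_powerset_insert ha]
    have key : ∀ S ∈ s.powerset,
        ((∏ i ∈ insert a S, p i) * ∏ i ∈ insert a s \ insert a S, (1 - p i)) *
            ‖∑ i ∈ insert a S, v i‖ ^ 2
          = (p a) * (((∏ i ∈ S, p i) * ∏ i ∈ s \ S, (1 - p i)) *
              (‖v a‖ ^ 2 + 2 * ⟪v a, ∑ i ∈ S, v i⟫ + ‖∑ i ∈ S, v i‖ ^ 2)) := by
      intro S hS
      rw [Finset.mem_powerset] at hS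
      have haS : a ∉ S := fun h => ha (hS h)
      rw [Finset.prod_insert haS, insert_sdiff_insert'' ha hS, Finset.sum_insert haS,
        norm_add_sq_real]
      ring
    have key2 : ∀ S ∈ s.powerset,
        ((∏ i ∈ S, p i) * ∏ i ∈ insert a s \ S, (1 - p i)) * ‖∑ i ∈ S, v i‖ ^ 2
          = (1 - p a) * (((∏ i ∈ S, p i) * ∏ i ∈ s \ S, (1 - p i)) * ‖∑ i ∈ S, v i‖ ^ 2) := by
      intro S hS
      rw [Finset.mem_powerset] at hS
      have h2 : insert a s \ S = insert a (s \ S) := by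
        rw [Finset.insert_sdiff_of_notMem _ (fun h => ha (hS h))]
      rw [h2, Finset.prod_insert (fun h => ha (Finset.mem_sdiff.1 h).1)]
      ring
    rw [Finset.sum_congr rfl key, Finset.sum_congr rfl key2, ← Finset.mul_sum, ← Finset.mul_sum]
    have hinner : ∑ S ∈ s.powerset,
        ((∏ i ∈ S, p i) * ∏ i ∈ s \ S, (1 - p i)) * ⟪v a, ∑ i ∈ S, v i⟫
        = ⟪v a, ∑ i ∈ s, p i • v i⟫ := by
      rw [← wmean s p v, inner_sum]
      refine Finset.sum_congr rfl fun S _ => ?_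
      rw [real_inner_smul_right]
    have hsplit : ∑ S ∈ s.powerset,
        ((∏ i ∈ S, p i) * ∏ i ∈ s \ S, (1 - p i)) *
          (‖v a‖ ^ 2 + 2 * ⟪v a, ∑ i ∈ S, v i⟫ + ‖∑ i ∈ S, v i‖ ^ 2)
        = ‖v a‖ ^ 2 + 2 * ⟪v a, ∑ i ∈ s, p i • v i⟫ +
            (‖∑ i ∈ s, p i • v i‖ ^ 2 + ∑ i ∈ s, (p i * (1 - p i)) * ‖v i‖ ^ 2) := by
      simp only [mul_add, Finset.sum_add_distrib, ← Finset.sum_mul, wsum_one, one_mul, ih,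
        mul_left_comm, Finset.mul_sum, hinner]
      rw [← Finset.mul_sum, hinner]
    rw [hsplit, ih, Finset.sum_insert ha, Finset.sum_insert ha, norm_add_sq_real]
    have : ‖p a • v a‖ ^ 2 = p a ^ 2 * ‖v a‖ ^ 2 := by
      rw [norm_smul, mul_pow, Real.norm_eq_abs, sq_abs]
    rw [this, real_inner_smul_left]
    ring



variable {E : Type*} [NormedAddCommGroup E] [InnerProductSpace ℝ E] [CompleteSpace E]

lemma hasDerivAt_line {h : E → ℝ} {G : E → E} (hg : ∀ w, HasGradientAt h (G w) w)
    (x v : E) (t : ℝ) :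
    HasDerivAt (fun s : ℝ => h (x + s • v)) ⟪G (x + t • v), v⟫ t := by
  have hc : HasDerivAt (fun s : ℝ => x + s • v) v t := by
    simpa using ((hasDerivAt_id t).smul_const v).const_add x
  have h1 : HasFDerivAt h (InnerProductSpace.toDual ℝ E (G (x + t • v))) (x + t • v) :=
    hasGradientAt_iff_hasFDerivAt.1 (hg _)
  simpa [InnerProductSpace.toDual_apply_apply, Function.comp_def] using h1.comp_hasDerivAt t hc

lemma convex_first_order {h : E → ℝ} {G : E → E} (hc : ConvexOn ℝ Set.univ h)
    (hg : ∀ w, HasGradientAt h (G w) w) (x y : E) :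
    h y + ⟪G y, x - y⟫ ≤ h x := by
  have hline : ConvexOn ℝ Set.univ (fun t : ℝ => h (y + t • (x - y))) := by
    have h0 := hc.comp_affineMap (AffineMap.lineMap y x : ℝ →ᵃ[ℝ] E)
    have heq : (h ∘ (AffineMap.lineMap y x : ℝ →ᵃ[ℝ] E)) = fun t : ℝ => h (y + t • (x - y)) := by
      funext t
      simp [AffineMap.lineMap_apply, add_comm]
    rw [heq] at h0
    simpa using h0
  have hd := hasDerivAt_line hg y (x - y) 0
  rw [show y + (0:ℝ) • (x - y) = y by simp] at hd
  have hs := hline.le_slope_of_hasDerivAt (Set.mem_univ 0) (Set.mem_univ 1) one_pos hd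
  rw [slope_def_field] at hs
  simp at hs
  linarith

lemma descent_lemma {h : E → ℝ} {G : E → E} (hg : ∀ w, HasGradientAt h (G w) w)
    {Lc : ℝ} (hL : ∀ a b, ‖G a - G b‖ ≤ Lc * ‖a - b‖) (x z : E) :
    h z ≤ h x + ⟪G x, z - x⟫ + Lc / 2 * ‖z - x‖ ^ 2 := by
  set v := z - x with hv
  set ψ : ℝ → ℝ := fun t => h (x + t • v) - t * ⟪G x, v⟫ - Lc * ‖v‖ ^ 2 / 2 * t ^ 2 with hψ
  have hD : ∀ t : ℝ, HasDerivAt ψ (⟪G (x + t • v), v⟫ - ⟪G x, v⟫ - Lc * ‖v‖ ^ 2 * t) t := by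
    intro t
    have h1 := hasDerivAt_line hg x v t
    have h2 : HasDerivAt (fun t : ℝ => t * ⟪G x, v⟫) ⟪G x, v⟫ t := by
      simpa using (hasDerivAt_id t).mul_const (⟪G x, v⟫)
    have h3 : HasDerivAt (fun t : ℝ => Lc * ‖v‖ ^ 2 / 2 * t ^ 2) (Lc * ‖v‖ ^ 2 * t) t := by
      have h4 := (hasDerivAt_pow 2 t).const_mul (Lc * ‖v‖ ^ 2 / 2)
      refine h4.congr_deriv ?_
      rw [show (2:ℕ) - 1 = 1 from rfl]
      push_cast
      ring
    exact (h1.sub h2).sub h3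
  have hanti : AntitoneOn ψ (Set.Icc 0 1) := by
    apply antitoneOn_of_deriv_nonpos (convex_Icc 0 1)
    · exact fun t _ => ((hD t).differentiableAt.continuousAt).continuousWithinAt
    · exact fun t _ => (hD t).differentiableAt.differentiableWithinAt
    · intro t ht
      rw [interior_Icc] at ht
      rw [(hD t).deriv]
      have hb : ⟪G (x + t • v), v⟫ - ⟪G x, v⟫ ≤ Lc * t * ‖v‖ ^ 2 := by
        rw [← inner_sub_left]
        calc ⟪G (x + t • v) - G x, v⟫ ≤ ‖G (x + t • v) - G x‖ * ‖v‖ := real_inner_le_norm _ _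
          _ ≤ (Lc * ‖x + t • v - x‖) * ‖v‖ :=
              mul_le_mul_of_nonneg_right (hL _ _) (norm_nonneg _)
          _ = Lc * t * ‖v‖ ^ 2 := by
              rw [add_sub_cancel_left, norm_smul, Real.norm_eq_abs, abs_of_pos ht.1]
              ring
      linarith
  have h01 := hanti (Set.mem_Icc.2 ⟨le_refl 0, zero_le_one⟩)
    (Set.mem_Icc.2 ⟨zero_le_one, le_refl 1⟩) zero_le_one
  have hψ0 : ψ 0 = h x := by simp [hψ]
  have hψ1 : ψ 1 = h z - ⟪G x, v⟫ - Lc * ‖v‖ ^ 2 / 2 := by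
    simp [hψ, hv]
  rw [hψ0, hψ1] at h01
  have hh : Lc / 2 * ‖v‖ ^ 2 = Lc * ‖v‖ ^ 2 / 2 := by ring
  linarith [hh]

lemma cocoercivity {h : E → ℝ} {G : E → E} (hc : ConvexOn ℝ Set.univ h)
    (hg : ∀ w, HasGradientAt h (G w) w) {Lc : ℝ}
    (hL : ∀ a b, ‖G a - G b‖ ≤ Lc * ‖a - b‖) (x y : E) :
    ‖G x - G y‖ ^ 2 ≤ 2 * Lc * (h x - h y - ⟪G y, x - y⟫) := by
  rcases lt_trichotomy Lc 0 with hneg | hzero | hpos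
  · have hxy : x = y := by
      by_contra hne
      have h1 := hL x y
      have h2 : (0:ℝ) < ‖x - y‖ := norm_pos_iff.2 (sub_ne_zero.2 hne)
      nlinarith [norm_nonneg (G x - G y)]
    subst hxy
    simp
  · have hGxy : G x = G y := by
      have h1 := hL x y
      rw [hzero, zero_mul] at h1
      exact sub_eq_zero.1 (norm_le_zero_iff.1 h1)
    simp [hGxy, hzero]
  · have hgφ : ∀ w, HasGradientAt (fun u => h u - ⟪G y, u⟫) (G w - G y) w := by
      intro w
      have h1 : HasFDerivAt h (InnerProductSpace.toDual ℝ E (G w)) w :=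
        hasGradientAt_iff_hasFDerivAt.1 (hg w)
      have h2 : HasFDerivAt (fun u : E => ⟪G y, u⟫)
          (InnerProductSpace.toDual ℝ E (G y) : E →L[ℝ] ℝ) w :=
        (InnerProductSpace.toDual ℝ E (G y)).hasFDerivAt
      have h3 := h1.sub h2
      have heq : (InnerProductSpace.toDual ℝ E (G w) : E →L[ℝ] ℝ)
          - InnerProductSpace.toDual ℝ E (G y)
          = InnerProductSpace.toDual ℝ E (G w - G y) := by rw [map_sub]
      rw [heq] at h3
      exact hasGradientAt_iff_hasFDerivAt.2 h3
    have hLφ : ∀ a b : E, ‖(G a - G y) - (G b - G y)‖ ≤ Lc * ‖a - b‖ := by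
      intro a b
      rw [sub_sub_sub_cancel_right]
      exact hL a b
    have hmin : ∀ w, h y - ⟪G y, y⟫ ≤ h w - ⟪G y, w⟫ := by
      intro w
      have h1 := convex_first_order hc hg w y
      rw [inner_sub_right] at h1
      linarith
    set z := x - Lc⁻¹ • (G x - G y) with hz
    have hd : h z - ⟪G y, z⟫ ≤ (h x - ⟪G y, x⟫) + ⟪G x - G y, z - x⟫
        + Lc / 2 * ‖z - x‖ ^ 2 :=
      descent_lemma hgφ hLφ x z
    have hzx : z - x = -(Lc⁻¹ • (G x - G y)) := by rw [hz]; abel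
    rw [hzx] at hd
    have e1 : ⟪G x - G y, -(Lc⁻¹ • (G x - G y))⟫ = -(Lc⁻¹ * ‖G x - G y‖ ^ 2) := by
      rw [inner_neg_right, real_inner_smul_right, real_inner_self_eq_norm_sq]
    have e2 : ‖-(Lc⁻¹ • (G x - G y))‖ ^ 2 = Lc⁻¹ ^ 2 * ‖G x - G y‖ ^ 2 := by
      rw [norm_neg, norm_smul, mul_pow, Real.norm_eq_abs, sq_abs]
    rw [e1, e2] at hd
    have h2 := hmin z
    have hco : Lc⁻¹ * ‖G x - G y‖ ^ 2 - Lc / 2 * (Lc⁻¹ ^ 2 * ‖G x - G y‖ ^ 2)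
        = (2 * Lc)⁻¹ * ‖G x - G y‖ ^ 2 := by
      field_simp
      ring
    have key : (2 * Lc)⁻¹ * ‖G x - G y‖ ^ 2 ≤ (h x - ⟪G y, x⟫) - (h y - ⟪G y, y⟫) := by
      rw [← hco]
      linarith
    have h2L : (0:ℝ) < 2 * Lc := by linarith
    have hixy : h x - h y - ⟪G y, x - y⟫ = (h x - ⟪G y, x⟫) - (h y - ⟪G y, y⟫) := by
      rw [inner_sub_right]
      ring
    rw [hixy]
    calc ‖G x - G y‖ ^ 2 = (2 * Lc) * ((2 * Lc)⁻¹ * ‖G x - G y‖ ^ 2) := by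
          field_simp
      _ ≤ (2 * Lc) * ((h x - ⟪G y, x⟫) - (h y - ⟪G y, y⟫)) :=
          mul_le_mul_of_nonneg_left key h2L.le

/-- Expected smoothness bound for τ-partition independent sampling (Lemma 1(ii)). -/
theorem stmt3 {d n K : ℕ} (hn : 1 ≤ n) (hK : 0 < K)
    (f : Fin n → EuclideanSpace ℝ (Fin d) → ℝ)
    (g : Fin n → EuclideanSpace ℝ (Fin d) → EuclideanSpace ℝ (Fin d))
    (hgrad : ∀ i x, HasGradientAt (f i) (g i x) x)
    (C : Fin K → Finset (Fin n))
    (hpart : ∀ i : Fin n, ∃! j, i ∈ C j)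
    (hCne : ∀ j, (C j).Nonempty)
    (q : Fin K → ℝ) (hq : ∀ j, 0 < q j) (hqsum : ∑ j, q j = 1)
    (p : Fin n → ℝ) (hp0 : ∀ i, 0 < p i) (hp1 : ∀ i, p i ≤ 1)
    (L : Fin n → ℝ) (LC : Fin K → ℝ)
    (hconv : ∀ i, ConvexOn ℝ Set.univ (f i))
    (hLi : ∀ i x y, ‖g i x - g i y‖ ≤ L i * ‖x - y‖)
    (hLC : ∀ j x y,
      ‖((C j).card : ℝ)⁻¹ • ∑ i ∈ C j, g i x -
          ((C j).card : ℝ)⁻¹ • ∑ i ∈ C j, g i y‖ ≤ LC j * ‖x - y‖)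
    (x y : EuclideanSpace ℝ (Fin d)) :
    ∑ j, q j *
        ∑ S ∈ (C j).powerset,
          ((∏ i ∈ S, p i) * ∏ i ∈ C j \ S, (1 - p i)) *
            ‖(n : ℝ)⁻¹ • ∑ i ∈ S, (q j * p i)⁻¹ • (g i x - g i y)‖ ^ 2
      ≤ 2 *
          ((n : ℝ)⁻¹ *
            (Finset.univ.sup' ⟨⟨0, hK⟩, Finset.mem_univ _⟩ fun j =>
              ((C j).card : ℝ) * LC j / q j +
                (C j).sup' (hCne j) fun i => L i * (1 - p i) / (q j * p i))) *
          ((n : ℝ)⁻¹ * ∑ i, f i x - (n : ℝ)⁻¹ * ∑ i, f i y -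
            ⟪(n : ℝ)⁻¹ • ∑ i, g i y, x - y⟫) := by
  classical
  have hn0 : (n:ℝ) ≠ 0 := Nat.cast_ne_zero.2 (by omega)
  set a : Fin n → EuclideanSpace ℝ (Fin d) := fun i => g i x - g i y with ha
  set D : Fin n → ℝ := fun i => f i x - f i y - ⟪g i y, x - y⟫ with hDdef
  set M : ℝ := Finset.univ.sup' ⟨⟨0, hK⟩, Finset.mem_univ _⟩ (fun j =>
      ((C j).card : ℝ) * LC j / q j +
        (C j).sup' (hCne j) fun i => L i * (1 - p i) / (q j * p i)) with hM
  have hD0 : ∀ i, 0 ≤ D i := by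
    intro i
    have h1 := convex_first_order (hconv i) (hgrad i) x y
    simp only [hDdef]
    linarith
  have hDa : ∀ i, ‖a i‖ ^ 2 ≤ 2 * L i * D i := by
    intro i
    have h1 := cocoercivity (hconv i) (hgrad i) (hLi i) x y
    simp only [ha, hDdef]
    exact h1
  have hkey : ∀ j, q j * ∑ S ∈ (C j).powerset, ((∏ i ∈ S, p i) * ∏ i ∈ C j \ S, (1 - p i)) *
        ‖(n : ℝ)⁻¹ • ∑ i ∈ S, (q j * p i)⁻¹ • (g i x - g i y)‖ ^ 2
      ≤ (n:ℝ)⁻¹ ^ 2 * (2 * M) * ∑ i ∈ C j, D i := by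
    intro j
    have hq0 : q j ≠ 0 := (hq j).ne'
    have hcard0 : (0:ℝ) < ((C j).card : ℝ) := by exact_mod_cast (hCne j).card_pos
    have hcardne : ((C j).card : ℝ) ≠ 0 := hcard0.ne'
    -- expectation identity
    have hEj : ∑ S ∈ (C j).powerset, ((∏ i ∈ S, p i) * ∏ i ∈ C j \ S, (1 - p i)) *
          ‖(n : ℝ)⁻¹ • ∑ i ∈ S, (q j * p i)⁻¹ • (g i x - g i y)‖ ^ 2
        = ((n:ℝ) * q j)⁻¹ ^ 2 * ‖∑ i ∈ C j, a i‖ ^ 2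
          + ∑ i ∈ C j, (p i * (1 - p i)) * (((n:ℝ)⁻¹ * (q j * p i)⁻¹) ^ 2 * ‖a i‖ ^ 2) := by
      have h1 : ∀ S ∈ (C j).powerset,
          ((∏ i ∈ S, p i) * ∏ i ∈ C j \ S, (1 - p i)) *
            ‖(n : ℝ)⁻¹ • ∑ i ∈ S, (q j * p i)⁻¹ • (g i x - g i y)‖ ^ 2
          = ((∏ i ∈ S, p i) * ∏ i ∈ C j \ S, (1 - p i)) *
            ‖∑ i ∈ S, (n:ℝ)⁻¹ • (q j * p i)⁻¹ • a i‖ ^ 2 := by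
        intro S _
        rw [Finset.smul_sum]
      rw [Finset.sum_congr rfl h1, wsq (C j) p (fun i => (n:ℝ)⁻¹ • (q j * p i)⁻¹ • a i)]
      congr 1
      · have h2 : ∀ i ∈ C j, p i • ((n:ℝ)⁻¹ • (q j * p i)⁻¹ • a i)
            = ((n:ℝ) * q j)⁻¹ • a i := by
          intro i _
          have hpne : p i ≠ 0 := (hp0 i).ne'
          rw [smul_smul, smul_smul]
          congr 1
          field_simp
        rw [Finset.sum_congr rfl h2, ← Finset.smul_sum, norm_smul, mul_pow, Real.norm_eq_abs,
          sq_abs]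
      · refine Finset.sum_congr rfl fun i _ => ?_
        rw [smul_smul, norm_smul, mul_pow, Real.norm_eq_abs, sq_abs]
    rw [hEj]
    -- gradient of the partition average
    have hGj : ∀ w, HasGradientAt (fun u => (((C j).card:ℝ))⁻¹ * ∑ i ∈ C j, f i u)
        ((((C j).card:ℝ))⁻¹ • ∑ i ∈ C j, g i w) w := by
      intro w
      have h1 : HasFDerivAt (fun u => ∑ i ∈ C j, f i u)
          (∑ i ∈ C j, (InnerProductSpace.toDual ℝ (EuclideanSpace ℝ (Fin d)) (g i w)
            : EuclideanSpace ℝ (Fin d) →L[ℝ] ℝ)) w :=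
        HasFDerivAt.fun_sum (fun i _ => hasGradientAt_iff_hasFDerivAt.1 (hgrad i w))
      have h2 := h1.const_smul ((((C j).card:ℝ))⁻¹)
      have heq : (((C j).card:ℝ))⁻¹ •
            ∑ i ∈ C j, (InnerProductSpace.toDual ℝ (EuclideanSpace ℝ (Fin d)) (g i w)
              : EuclideanSpace ℝ (Fin d) →L[ℝ] ℝ)
          = InnerProductSpace.toDual ℝ (EuclideanSpace ℝ (Fin d))
              ((((C j).card:ℝ))⁻¹ • ∑ i ∈ C j, g i w) := by
        rw [map_smul, map_sum]
      rw [heq] at h2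
      exact hasGradientAt_iff_hasFDerivAt.2 (by simpa [smul_eq_mul, Pi.smul_def] using h2)
    have hconvj : ConvexOn ℝ Set.univ (fun u => (((C j).card:ℝ))⁻¹ * ∑ i ∈ C j, f i u) := by
      have h1 := (convexOn_finset_sum (C j) (fun i _ => hconv i)).smul
        (c := (((C j).card:ℝ))⁻¹) (by positivity)
      simpa [smul_eq_mul] using h1
    have hcoj := cocoercivity hconvj hGj (hLC j) x y
    have e3 : (((C j).card:ℝ))⁻¹ • ∑ i ∈ C j, g i x - (((C j).card:ℝ))⁻¹ • ∑ i ∈ C j, g i y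
        = (((C j).card:ℝ))⁻¹ • ∑ i ∈ C j, a i := by
      rw [← smul_sub, ← Finset.sum_sub_distrib]
    have e5 : (((C j).card:ℝ))⁻¹ * ∑ i ∈ C j, f i x - (((C j).card:ℝ))⁻¹ * ∑ i ∈ C j, f i y
          - ⟪(((C j).card:ℝ))⁻¹ • ∑ i ∈ C j, g i y, x - y⟫
        = (((C j).card:ℝ))⁻¹ * ∑ i ∈ C j, D i := by
      rw [real_inner_smul_left, sum_inner]
      simp only [hDdef]
      rw [Finset.sum_sub_distrib, Finset.sum_sub_distrib]
      ring
    rw [e3, e5] at hcoj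
    have e4 : ‖(((C j).card:ℝ))⁻¹ • ∑ i ∈ C j, a i‖ ^ 2
        = ((((C j).card:ℝ))⁻¹) ^ 2 * ‖∑ i ∈ C j, a i‖ ^ 2 := by
      rw [norm_smul, mul_pow, Real.norm_eq_abs, sq_abs]
    rw [e4] at hcoj
    have hsumbound : ‖∑ i ∈ C j, a i‖ ^ 2
        ≤ 2 * (((C j).card:ℝ)) * LC j * ∑ i ∈ C j, D i := by
      have h3 := mul_le_mul_of_nonneg_left hcoj (by positivity : (0:ℝ) ≤ (((C j).card:ℝ)) ^ 2)
      calc ‖∑ i ∈ C j, a i‖ ^ 2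
          = (((C j).card:ℝ)) ^ 2 * (((((C j).card:ℝ))⁻¹) ^ 2 * ‖∑ i ∈ C j, a i‖ ^ 2) := by
            field_simp
        _ ≤ (((C j).card:ℝ)) ^ 2 * (2 * LC j * ((((C j).card:ℝ))⁻¹ * ∑ i ∈ C j, D i)) := h3
        _ = 2 * (((C j).card:ℝ)) * LC j * ∑ i ∈ C j, D i := by
            field_simp
    have hMj : ((C j).card : ℝ) * LC j / q j
          + (C j).sup' (hCne j) (fun i => L i * (1 - p i) / (q j * p i)) ≤ M := by
      rw [hM]
      exact Finset.le_sup' (fun j => ((C j).card : ℝ) * LC j / q j +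
        (C j).sup' (hCne j) fun i => L i * (1 - p i) / (q j * p i)) (Finset.mem_univ j)
    have hA : q j * (((n:ℝ) * q j)⁻¹ ^ 2 * ‖∑ i ∈ C j, a i‖ ^ 2)
        ≤ (n:ℝ)⁻¹ ^ 2 * ∑ i ∈ C j, (2 * (((C j).card:ℝ) * LC j / q j)) * D i := by
      have e6 : q j * (((n:ℝ) * q j)⁻¹ ^ 2 * ‖∑ i ∈ C j, a i‖ ^ 2)
          = ((n:ℝ)⁻¹ ^ 2 * (q j)⁻¹) * ‖∑ i ∈ C j, a i‖ ^ 2 := by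
        field_simp
      rw [e6]
      calc ((n:ℝ)⁻¹ ^ 2 * (q j)⁻¹) * ‖∑ i ∈ C j, a i‖ ^ 2
          ≤ ((n:ℝ)⁻¹ ^ 2 * (q j)⁻¹) * (2 * (((C j).card:ℝ)) * LC j * ∑ i ∈ C j, D i) :=
            mul_le_mul_of_nonneg_left hsumbound
              (mul_nonneg (by positivity) (inv_nonneg.2 (hq j).le))
        _ = (n:ℝ)⁻¹ ^ 2 * ∑ i ∈ C j, (2 * (((C j).card:ℝ) * LC j / q j)) * D i := by
            simp only [Finset.mul_sum]
            refine Finset.sum_congr rfl fun i _ => ?_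
            ring
    have hB : ∀ i ∈ C j, q j * ((p i * (1 - p i)) * (((n:ℝ)⁻¹ * (q j * p i)⁻¹) ^ 2 * ‖a i‖ ^ 2))
        ≤ (n:ℝ)⁻¹ ^ 2 * ((2 * (L i * (1 - p i) / (q j * p i))) * D i) := by
      intro i _
      have hpne : p i ≠ 0 := (hp0 i).ne'
      have h1p : 0 ≤ 1 - p i := by linarith [hp1 i]
      have e7 : q j * ((p i * (1 - p i)) * (((n:ℝ)⁻¹ * (q j * p i)⁻¹) ^ 2 * ‖a i‖ ^ 2))
          = ((n:ℝ)⁻¹ ^ 2 * ((1 - p i) / (q j * p i))) * ‖a i‖ ^ 2 := by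
        field_simp
      rw [e7]
      have hcoef : 0 ≤ (n:ℝ)⁻¹ ^ 2 * ((1 - p i) / (q j * p i)) :=
        mul_nonneg (by positivity) (div_nonneg h1p (mul_pos (hq j) (hp0 i)).le)
      calc ((n:ℝ)⁻¹ ^ 2 * ((1 - p i) / (q j * p i))) * ‖a i‖ ^ 2
          ≤ ((n:ℝ)⁻¹ ^ 2 * ((1 - p i) / (q j * p i))) * (2 * L i * D i) :=
            mul_le_mul_of_nonneg_left (hDa i) hcoef
        _ = (n:ℝ)⁻¹ ^ 2 * ((2 * (L i * (1 - p i) / (q j * p i))) * D i) := by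
            field_simp
    rw [mul_add, Finset.mul_sum]
    calc q j * (((n:ℝ) * q j)⁻¹ ^ 2 * ‖∑ i ∈ C j, a i‖ ^ 2)
          + ∑ i ∈ C j, q j * ((p i * (1 - p i)) * (((n:ℝ)⁻¹ * (q j * p i)⁻¹) ^ 2 * ‖a i‖ ^ 2))
        ≤ ((n:ℝ)⁻¹ ^ 2 * ∑ i ∈ C j, (2 * (((C j).card:ℝ) * LC j / q j)) * D i)
          + ∑ i ∈ C j, (n:ℝ)⁻¹ ^ 2 * ((2 * (L i * (1 - p i) / (q j * p i))) * D i) :=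
          add_le_add hA (Finset.sum_le_sum hB)
      _ = ∑ i ∈ C j, (n:ℝ)⁻¹ ^ 2 *
            ((2 * (((C j).card:ℝ) * LC j / q j + L i * (1 - p i) / (q j * p i))) * D i) := by
          rw [Finset.mul_sum, ← Finset.sum_add_distrib]
          refine Finset.sum_congr rfl fun i _ => ?_
          ring
      _ ≤ ∑ i ∈ C j, (n:ℝ)⁻¹ ^ 2 * ((2 * M) * D i) := by
          refine Finset.sum_le_sum fun i hi => ?_
          have hBi : L i * (1 - p i) / (q j * p i)
              ≤ (C j).sup' (hCne j) (fun i => L i * (1 - p i) / (q j * p i)) :=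
            Finset.le_sup' (fun i => L i * (1 - p i) / (q j * p i)) hi
          have h2M : 2 * (((C j).card:ℝ) * LC j / q j + L i * (1 - p i) / (q j * p i))
              ≤ 2 * M := by linarith
          exact mul_le_mul_of_nonneg_left
            (mul_le_mul_of_nonneg_right h2M (hD0 i)) (by positivity)
      _ = (n:ℝ)⁻¹ ^ 2 * (2 * M) * ∑ i ∈ C j, D i := by
          rw [← Finset.mul_sum, ← Finset.mul_sum]
          ring
  have hparts : ∑ j, ∑ i ∈ C j, D i = ∑ i, D i := by
    have h1 : ∀ j : Fin K, ∑ i ∈ C j, D i = ∑ i : Fin n, if i ∈ C j then D i else 0 := by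
      intro j
      rw [Finset.sum_ite_mem, Finset.univ_inter]
    rw [Finset.sum_congr rfl (fun j _ => h1 j), Finset.sum_comm]
    refine Finset.sum_congr rfl fun i _ => ?_
    obtain ⟨j0, hj0, huniq⟩ := hpart i
    rw [Finset.sum_eq_single j0]
    · simp [hj0]
    · intro b _ hb
      simp only [ite_eq_right_iff]
      intro hbmem
      exact absurd (huniq b hbmem) hb
    · intro hj
      exact absurd (Finset.mem_univ j0) hj
  calc ∑ j, q j * ∑ S ∈ (C j).powerset, ((∏ i ∈ S, p i) * ∏ i ∈ C j \ S, (1 - p i)) *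
          ‖(n : ℝ)⁻¹ • ∑ i ∈ S, (q j * p i)⁻¹ • (g i x - g i y)‖ ^ 2
      ≤ ∑ j, (n:ℝ)⁻¹ ^ 2 * (2 * M) * ∑ i ∈ C j, D i :=
        Finset.sum_le_sum fun j _ => hkey j
    _ = (n:ℝ)⁻¹ ^ 2 * (2 * M) * ∑ i, D i := by
        rw [← Finset.mul_sum, hparts]
    _ = 2 * ((n : ℝ)⁻¹ * M) * ((n : ℝ)⁻¹ * ∑ i, f i x - (n : ℝ)⁻¹ * ∑ i, f i y -
          ⟪(n : ℝ)⁻¹ • ∑ i, g i y, x - y⟫) := by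
        have hin : ⟪(n:ℝ)⁻¹ • ∑ i, g i y, x - y⟫ = (n:ℝ)⁻¹ * ∑ i, ⟪g i y, x - y⟫ := by
          rw [real_inner_smul_left, sum_inner]
        have hDsum : ∑ i, D i = ∑ i, f i x - ∑ i, f i y - ∑ i, ⟪g i y, x - y⟫ := by
          simp only [hDdef]
          rw [Finset.sum_sub_distrib, Finset.sum_sub_distrib]
        rw [hin, hDsum]
        ring
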